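/- Let k ≥ 4 and S = ⟨2k+1, 2k+2, ..., 3k+1⟩. Then the gaps of S are {1, 2, ..., 2k} ∪ {3k+2, ..., 4k+1}; in particular the Frobenius number of S is 4k+1. -/

import Mathlib

lemma stmt3_aux (k : ℕ) (hk : 4 ≤ k) (n : ℕ) :
    n ∈ AddSubmonoid.closure (Set.Icc (2 * k + 1) (3 * k + 1)) ↔
      ∃ m, m * (2 * k + 1) ≤ n ∧ n ≤ m * (3 * k + 1) := by
  constructor
  · intro h
    induction h using AddSubmonoid.closure_induction with
    | mem x hx => exact ⟨1, by simpa using hx.1, by simpa using hx.2⟩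
    | zero => exact ⟨0, by simp, by simp⟩
    | add a b _ _ ha hb =>
      obtain ⟨m1, h1, h2⟩ := ha
      obtain ⟨m2, h3, h4⟩ := hb
      exact ⟨m1 + m2, by nlinarith, by nlinarith⟩
  · rintro ⟨m, h1, h2⟩
    induction m generalizing n with
    | zero =>
      have hn0 : n = 0 := by omega
      rw [hn0]
      exact zero_mem _
    | succ m ih =>
      have e1 : (m + 1) * (2 * k + 1) = m * (2 * k + 1) + (2 * k + 1) := by ring
      have e2 : (m + 1) * (3 * k + 1) = m * (3 * k + 1) + (3 * k + 1) := by ring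
      have e3 : m * (2 * k + 1) ≤ m * (3 * k + 1) := Nat.mul_le_mul_left m (by omega)
      set a := max (2 * k + 1) (n - m * (3 * k + 1)) with ha
      have hub : a ≤ 3 * k + 1 := by
        simp only [ha, max_le_iff]; omega
      have hlb : 2 * k + 1 ≤ a := le_max_left _ _
      have han : a ≤ n := by
        simp only [ha, max_le_iff]; omega
      have hamax : a = 2 * k + 1 ∨ a = n - m * (3 * k + 1) := by
        rcases max_choice (2 * k + 1) (n - m * (3 * k + 1)) with h | h <;> [left; right] <;>
          rw [ha, h]
      have hr1 : m * (2 * k + 1) ≤ n - a := by omega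
      have hr2 : n - a ≤ m * (3 * k + 1) := by
        have := le_max_right (2 * k + 1) (n - m * (3 * k + 1))
        omega
      have hrep : n = a + (n - a) := by omega
      rw [hrep]
      exact add_mem (AddSubmonoid.subset_closure ⟨hlb, hub⟩) (ih _ hr1 hr2)

theorem stmt_3 (k : ℕ) (hk : 4 ≤ k)
    (S : Set ℕ)
    (hS : S = {n : ℕ | n ∈ AddSubmonoid.closure (Set.Icc (2 * k + 1) (3 * k + 1))}) :
    {n : ℕ | 0 < n ∧ n ∉ S} =
      Set.Icc 1 (2 * k) ∪ Set.Icc (3 * k + 2) (4 * k + 1) ∧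
    IsGreatest {n : ℕ | n ∉ S} (4 * k + 1) := by
  have hmem : ∀ n, n ∈ S ↔ ∃ m, m * (2 * k + 1) ≤ n ∧ n ≤ m * (3 * k + 1) := by
    intro n; rw [hS]; exact stmt3_aux k hk n
  have hbig : ∀ n, 4 * k + 2 ≤ n → n ∈ S := by
    intro n hn
    rw [hmem]
    set q := n / (2 * k + 1) with hq
    have hdm := Nat.div_add_mod n (2 * k + 1)
    have hmod : n % (2 * k + 1) < 2 * k + 1 := Nat.mod_lt _ (by omega)
    have hm2 : 2 ≤ q := by
      rw [hq, Nat.le_div_iff_mul_le (by omega)]; omega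
    refine ⟨q, Nat.div_mul_le_self _ _, ?_⟩
    rw [← hq] at hdm
    have hkq : 2 * k ≤ k * q := by nlinarith
    have e : q * (3 * k + 1) = (2 * k + 1) * q + k * q := by ring
    omega
  have hmid : ∀ n, 2 * k + 1 ≤ n → n ≤ 3 * k + 1 → n ∈ S := by
    intro n h1 h2
    rw [hmem]; exact ⟨1, by omega, by omega⟩
  have hgap : ∀ n, n ∈ Set.Icc 1 (2 * k) ∪ Set.Icc (3 * k + 2) (4 * k + 1) → n ∉ S := by
    intro n hn hnS
    rw [hmem] at hnS
    obtain ⟨m, h1, h2⟩ := hnS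
    simp only [Set.mem_union, Set.mem_Icc] at hn
    have hm : m = 0 ∨ m = 1 ∨ 2 ≤ m := by omega
    rcases hm with rfl | rfl | hm
    · omega
    · omega
    · have : 2 * (2 * k + 1) ≤ m * (2 * k + 1) := Nat.mul_le_mul_right _ hm
      omega
  have hfour : (4 * k + 1) ∉ S := hgap _ (by right; simp only [Set.mem_Icc]; omega)
  constructor
  · ext n
    simp only [Set.mem_setOf_eq, Set.mem_union, Set.mem_Icc]
    constructor
    · rintro ⟨hn, hnS⟩
      by_contra hc
      push_neg at hc
      rcases lt_or_ge n (2 * k + 1) with h | h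
      · omega
      · rcases le_or_gt n (3 * k + 1) with h' | h'
        · exact hnS (hmid n h h')
        · exact hnS (hbig n (by omega))
    · intro h
      refine ⟨by omega, hgap n ?_⟩
      simpa [Set.mem_union, Set.mem_Icc] using h
  · refine ⟨hfour, fun n hn => ?_⟩
    by_contra hc
    exact hn (hbig n (by omega))
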